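/- Let Λ be a finite ring and Λ[[t]] the power series ring in one central variable. Let ∂ : P → Q be a homomorphism of finitely generated projective Λ[[t]]-modules such that P and Q are isomorphic as Λ[[t]]-modules and coker(∂) is finite. Then ∂ is injective. -/

import Mathlib

open PowerSeries Submodule Function

section Aux
variable (Λ : Type*) [Ring Λ]

private lemma auxXpowComm (n : ℕ) (r : PowerSeries Λ) :
    (PowerSeries.X ^ n) * r = r * PowerSeries.X ^ n :=
  ((PowerSeries.commute_X r).symm.pow_left n).eq

variable (M : Type*) [AddCommGroup M] [Module (PowerSeries Λ) M]

private noncomputable def smulX (n : ℕ) : M →ₗ[PowerSeries Λ] M where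
  toFun x := (PowerSeries.X ^ n : PowerSeries Λ) • x
  map_add' x y := smul_add _ x y
  map_smul' r x := by
    simp only [RingHom.id_apply, smul_smul, auxXpowComm]

variable {M}

private lemma smulX_apply (n : ℕ) (x : M) :
    smulX Λ M n x = (PowerSeries.X ^ n : PowerSeries Λ) • x := rfl

variable (M) in
private noncomputable def TT (n : ℕ) : Submodule (PowerSeries Λ) M :=
  LinearMap.range (smulX Λ M n)

private lemma TT_le {n m : ℕ} (h : n ≤ m) : TT Λ M m ≤ TT Λ M n := by
  rintro x ⟨y, rfl⟩
  refine ⟨(PowerSeries.X ^ (m - n) : PowerSeries Λ) • y, ?_⟩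
  rw [smulX_apply, smulX_apply, smul_smul, ← pow_add, Nat.add_sub_cancel' h]

private lemma smul_mem_TT (n : ℕ) (x : M) :
    (PowerSeries.X ^ n : PowerSeries Λ) • x ∈ TT Λ M n := ⟨x, rfl⟩

variable {Λ}

private lemma ps_tf (n : ℕ) (f : PowerSeries Λ) (h : (PowerSeries.X ^ n) * f = 0) : f = 0 := by
  ext k
  have := PowerSeries.coeff_X_pow_mul f n k
  rw [h, map_zero] at this
  simp [← this]

private lemma ps_sep (f : PowerSeries Λ) (h : ∀ n, ∃ g, (PowerSeries.X ^ n) * g = f) : f = 0 := by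
  ext k
  obtain ⟨g, rfl⟩ := h (k + 1)
  rw [PowerSeries.coeff_X_pow_mul', if_neg (by omega), map_zero]

private lemma ps_trunc (n : ℕ) (r : PowerSeries Λ) :
    ∃ g, r = (∑ j ∈ Finset.range n, PowerSeries.monomial j (PowerSeries.coeff j r))
      + (PowerSeries.X ^ n) * g := by
  refine ⟨PowerSeries.mk fun j => PowerSeries.coeff (j + n) r, ?_⟩
  ext k
  rw [map_add, PowerSeries.coeff_X_pow_mul']
  rw [map_sum]
  simp only [PowerSeries.coeff_monomial]
  by_cases hk : k < n
  · rw [Finset.sum_eq_single k (by intro b _ hb; exact if_neg (Ne.symm hb))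
      (fun hk' => absurd (Finset.mem_range.2 hk) hk'), if_pos rfl, if_neg (by omega), add_zero]
  · rw [Finset.sum_eq_zero (fun b hb => if_neg (by rw [Finset.mem_range] at hb; omega)),
      if_pos (by omega), PowerSeries.coeff_mk, zero_add, Nat.sub_add_cancel (by omega)]

-- torsion-freeness of projective modules
private lemma mod_tf [Module.Projective (PowerSeries Λ) M] (n : ℕ) (x : M)
    (h : (PowerSeries.X ^ n : PowerSeries Λ) • x = 0) : x = 0 := by
  obtain ⟨s, hs⟩ := (inferInstance : Module.Projective (PowerSeries Λ) M).out
  have hsx : s x = 0 := by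
    refine Finsupp.ext fun p => ?_
    have h0 : s ((PowerSeries.X ^ n : PowerSeries Λ) • x) = 0 := by rw [h, map_zero]
    rw [map_smul] at h0
    have := congrArg (fun f => f p) h0
    simp only [Finsupp.smul_apply, smul_eq_mul, Finsupp.coe_zero, Pi.zero_apply] at this
    exact ps_tf n _ this
  have := hs x
  rw [hsx, map_zero] at this
  exact this.symm

-- separatedness of projective modules
private lemma mod_sep [Module.Projective (PowerSeries Λ) M] (x : M)
    (h : ∀ n, x ∈ TT Λ M n) : x = 0 := by
  obtain ⟨s, hs⟩ := (inferInstance : Module.Projective (PowerSeries Λ) M).out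
  have hsx : s x = 0 := by
    refine Finsupp.ext fun p => ?_
    refine ps_sep (s x p) fun n => ?_
    obtain ⟨y, rfl⟩ := h n
    refine ⟨s y p, ?_⟩
    rw [smulX_apply, map_smul]
    simp [Finsupp.smul_apply, smul_eq_mul]
  have := hs x
  rw [hsx, map_zero] at this
  exact this.symm

-- finiteness of quotients
private lemma finite_quot [Finite Λ] [Module.Finite (PowerSeries Λ) M] (n : ℕ) :
    Finite (M ⧸ TT Λ M n) := by
  obtain ⟨k, v, hv⟩ := Module.Finite.exists_fin (R := PowerSeries Λ) (M := M)
  let φ : (Fin k → (Fin n → Λ)) → M ⧸ TT Λ M n := fun c =>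
    Submodule.Quotient.mk
      (∑ i, (∑ j ∈ Finset.range n, if hj : j < n then
        PowerSeries.monomial j (c i ⟨j, hj⟩) else 0) • v i)
  have hφ : Surjective φ := by
    intro q
    obtain ⟨x, rfl⟩ := Submodule.Quotient.mk_surjective _ q
    have hx : x ∈ span (PowerSeries Λ) (Set.range v) := by rw [hv]; exact Submodule.mem_top
    obtain ⟨r, rfl⟩ := (mem_span_range_iff_exists_fun _).1 hx
    refine ⟨fun i j => PowerSeries.coeff j (r i), ?_⟩
    have key : ∀ i : Fin k,
        (∑ j ∈ Finset.range n, if hj : j < n then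
          PowerSeries.monomial j (PowerSeries.coeff j (r i)) else 0)
          = ∑ j ∈ Finset.range n, PowerSeries.monomial j (PowerSeries.coeff j (r i)) :=
      fun i => Finset.sum_congr rfl fun j hj => dif_pos (Finset.mem_range.1 hj)
    simp only [φ, key]
    rw [Submodule.Quotient.eq]
    choose g hg using fun i => ps_trunc n (r i)
    have : (∑ i, (∑ j ∈ Finset.range n,
        PowerSeries.monomial j (PowerSeries.coeff j (r i))) • v i) - ∑ i, r i • v i
        = -((PowerSeries.X ^ n : PowerSeries Λ) • ∑ i, g i • v i) := by
      rw [← Finset.sum_sub_distrib, Finset.smul_sum, ← Finset.sum_neg_distrib]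
      refine Finset.sum_congr rfl fun i _ => ?_
      rw [← sub_smul]
      set T := ∑ j ∈ Finset.range n, PowerSeries.monomial j (PowerSeries.coeff j (r i)) with hT
      rw [hg i, sub_add_cancel_left, neg_smul, mul_smul]
    rw [this]
    exact neg_mem (smul_mem_TT Λ n _)
  exact Finite.of_surjective φ hφ

end Aux

private lemma card_lt_of_surj {A B : Type*} [Finite A] (h : A → B) (hsurj : Surjective h)
    (a₁ a₂ : A) (hne : a₁ ≠ a₂) (heq : h a₁ = h a₂) : Nat.card B < Nat.card A := by
  classical
  have hs : Surjective (fun a : {a : A // a ≠ a₂} => h a) := by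
    intro b
    obtain ⟨a, rfl⟩ := hsurj b
    by_cases ha : a = a₂
    · subst ha; exact ⟨⟨a₁, hne⟩, heq⟩
    · exact ⟨⟨a, ha⟩, rfl⟩
  have h1 : Nat.card B ≤ Nat.card {a : A // a ≠ a₂} := Nat.card_le_card_of_surjective _ hs
  have h2 : Nat.card {a : A // a ≠ a₂} < Nat.card A := by
    have := Fintype.ofFinite A
    simp only [Nat.card_eq_fintype_card]
    exact Fintype.card_subtype_lt (x := a₂) (by simp)
  omega

/-- Let `Λ` be a finite ring and `∂ : P → Q` a homomorphism of finitely generated projective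
`Λ[[t]]`-modules such that `P` and `Q` are isomorphic as `Λ[[t]]`-modules and `coker ∂` is
finite.  Then `∂` is injective. -/
theorem injective_of_finite_coker (Λ : Type*) [Ring Λ] [Finite Λ]
    (P Q : Type*) [AddCommGroup P] [AddCommGroup Q]
    [Module (PowerSeries Λ) P] [Module (PowerSeries Λ) Q]
    [Module.Finite (PowerSeries Λ) P] [Module.Projective (PowerSeries Λ) P]
    [Module.Finite (PowerSeries Λ) Q] [Module.Projective (PowerSeries Λ) Q]
    (hiso : Nonempty (P ≃ₗ[PowerSeries Λ] Q))
    (d : P →ₗ[PowerSeries Λ] Q)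
    (hcoker : Finite (Q ⧸ LinearMap.range d)) :
    Function.Injective d := by
  classical
  obtain ⟨e⟩ := hiso
  -- `d` maps `X^n P` into `X^n Q`
  have hdT : ∀ n, TT Λ P n ≤ (TT Λ Q n).comap d := by
    rintro n x ⟨y, rfl⟩
    exact ⟨d y, by rw [smulX_apply, smulX_apply, map_smul]⟩
  let dbar : ∀ n, (P ⧸ TT Λ P n) →ₗ[PowerSeries Λ] Q ⧸ TT Λ Q n := fun n =>
    Submodule.mapQ _ _ d (hdT n)
  -- the isomorphism `e` identifies `X^n P` with `X^n Q`
  have hmap : ∀ n, (TT Λ P n).map (e : P →ₗ[PowerSeries Λ] Q) = TT Λ Q n := by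
    intro n
    apply le_antisymm
    · rintro q ⟨x, ⟨y, rfl⟩, rfl⟩
      exact ⟨e y, by rw [smulX_apply, smulX_apply, map_smul, LinearEquiv.coe_coe]⟩
    · rintro q ⟨y, rfl⟩
      exact ⟨smulX Λ P n (e.symm y), ⟨_, rfl⟩,
        by rw [smulX_apply, smulX_apply, map_smul, LinearEquiv.coe_coe, e.apply_symm_apply]⟩
  have hcardeq : ∀ n, Nat.card (P ⧸ TT Λ P n) = Nat.card (Q ⧸ TT Λ Q n) := fun n =>
    Nat.card_congr (Submodule.Quotient.equiv (TT Λ P n) (TT Λ Q n) e (hmap n)).toEquiv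
  set c := Nat.card (Q ⧸ LinearMap.range d) with hc
  -- the kernel of the induced map on quotients has cardinality at most `c`
  have hker : ∀ n, Nat.card (LinearMap.ker (dbar n)) ≤ c := by
    intro n
    haveI := finite_quot (Λ := Λ) (M := P) n
    haveI := finite_quot (Λ := Λ) (M := Q) n
    -- counting
    have h1 : Nat.card (P ⧸ TT Λ P n)
        = Nat.card ((P ⧸ TT Λ P n) ⧸ LinearMap.ker (dbar n))
          * Nat.card (LinearMap.ker (dbar n)) :=
      AddSubgroup.card_eq_card_quotient_mul_card_addSubgroup
        (LinearMap.ker (dbar n)).toAddSubgroup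
    have h2 : Nat.card ((P ⧸ TT Λ P n) ⧸ LinearMap.ker (dbar n))
        = Nat.card (LinearMap.range (dbar n)) :=
      Nat.card_congr (LinearMap.quotKerEquivRange (dbar n)).toEquiv
    have h3 : Nat.card (Q ⧸ TT Λ Q n)
        = Nat.card ((Q ⧸ TT Λ Q n) ⧸ LinearMap.range (dbar n))
          * Nat.card (LinearMap.range (dbar n)) :=
      AddSubgroup.card_eq_card_quotient_mul_card_addSubgroup
        (LinearMap.range (dbar n)).toAddSubgroup
    have hpos : 0 < Nat.card (LinearMap.range (dbar n)) := Nat.card_pos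
    have h4 : Nat.card (LinearMap.ker (dbar n))
        = Nat.card ((Q ⧸ TT Λ Q n) ⧸ LinearMap.range (dbar n)) := by
      have heq := hcardeq n
      rw [h1, h2, h3, mul_comm] at heq
      exact Nat.eq_of_mul_eq_mul_right hpos heq
    -- the last quotient is a quotient of the cokernel of `d`
    have h5 : Nat.card ((Q ⧸ TT Λ Q n) ⧸ LinearMap.range (dbar n)) ≤ c := by
      have hcond : LinearMap.range d ≤ LinearMap.ker
          ((LinearMap.range (dbar n)).mkQ ∘ₗ (TT Λ Q n).mkQ) := by
        rintro q ⟨p, rfl⟩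
        simp only [LinearMap.mem_ker, LinearMap.comp_apply]
        rw [Submodule.mkQ_apply, Submodule.Quotient.mk_eq_zero]
        exact ⟨Submodule.Quotient.mk p, by rw [Submodule.mapQ_apply]; rfl⟩
      let ψ := (LinearMap.range d).liftQ
        ((LinearMap.range (dbar n)).mkQ ∘ₗ (TT Λ Q n).mkQ) hcond
      have hψ : Surjective ψ := by
        intro b
        obtain ⟨z, rfl⟩ := Submodule.Quotient.mk_surjective _ b
        obtain ⟨q, rfl⟩ := Submodule.Quotient.mk_surjective _ z
        exact ⟨Submodule.Quotient.mk q, rfl⟩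
      exact Nat.card_le_card_of_surjective ψ hψ
    omega
  -- the maps from `ker d` to the quotients
  let fK : ∀ n, (LinearMap.ker d) →ₗ[PowerSeries Λ] P ⧸ TT Λ P n := fun n =>
    (TT Λ P n).mkQ ∘ₗ (LinearMap.ker d).subtype
  have hrange_le : ∀ n, LinearMap.range (fK n) ≤ LinearMap.ker (dbar n) := by
    rintro n q ⟨⟨x, hx⟩, rfl⟩
    simp only [LinearMap.mem_ker, fK, LinearMap.comp_apply, Submodule.subtype_apply]
    rw [Submodule.mkQ_apply, Submodule.mapQ_apply, LinearMap.mem_ker.1 hx]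
    rfl
  set gfun : ℕ → ℕ := fun n => Nat.card (LinearMap.range (fK n)) with hgfun
  have hbdd : ∀ n, gfun n ≤ c := by
    intro n
    haveI := finite_quot (Λ := Λ) (M := P) n
    exact le_trans
      (Nat.card_le_card_of_injective (Submodule.inclusion (hrange_le n))
        (Submodule.inclusion_injective _)) (hker n)
  -- choose `n₀` maximizing `gfun`
  obtain ⟨n₀, hn₀⟩ : ∃ n₀, ∀ m, gfun m ≤ gfun n₀ := by
    have hbdd' : BddAbove (Set.range gfun) := ⟨c, by rintro _ ⟨m, rfl⟩; exact hbdd m⟩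
    obtain ⟨n₀, hgn₀⟩ := Nat.sSup_mem ⟨gfun 0, Set.mem_range_self 0⟩ hbdd'
    exact ⟨n₀, fun m => hgn₀ ▸ le_csSup hbdd' ⟨m, rfl⟩⟩
  -- claim: `fK n₀` is injective
  have hinj : ∀ x : LinearMap.ker d, fK n₀ x = 0 → x = 0 := by
    intro x hx0
    by_contra hx
    have hxP : (x : P) ≠ 0 := fun h => hx (Subtype.ext h)
    have hnot : ¬ ∀ n, (x : P) ∈ TT Λ P n := fun h => hxP (mod_sep _ h)
    push_neg at hnot
    obtain ⟨m, hm⟩ := hnot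
    set m' := max m n₀ with hm'def
    have hm' : (x : P) ∉ TT Λ P m' := fun h => hm (TT_le Λ (le_max_left _ _) h)
    let π : (P ⧸ TT Λ P m') →ₗ[PowerSeries Λ] P ⧸ TT Λ P n₀ :=
      Submodule.mapQ _ _ LinearMap.id (fun y hy => TT_le Λ (le_max_right _ _) hy)
    have hπf : ∀ y : LinearMap.ker d, π (fK m' y) = fK n₀ y := fun y => by
      simp only [fK, LinearMap.comp_apply, Submodule.subtype_apply, Submodule.mkQ_apply, π,
        Submodule.mapQ_apply, LinearMap.id_apply]
    haveI := finite_quot (Λ := Λ) (M := P) m'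
    -- restriction of π to the ranges
    let h : LinearMap.range (fK m') → LinearMap.range (fK n₀) := fun a =>
      ⟨π a, by
        obtain ⟨z, hz⟩ := a.2
        exact ⟨z, by rw [← hz, hπf]⟩⟩
    have hsurj : Surjective h := by
      rintro ⟨z, y, rfl⟩
      exact ⟨⟨fK m' y, ⟨y, rfl⟩⟩, Subtype.ext (hπf y)⟩
    have hlt : gfun n₀ < gfun m' := by
      refine card_lt_of_surj h hsurj ⟨fK m' x, ⟨x, rfl⟩⟩ ⟨0, zero_mem _⟩ ?_ ?_
      · intro hcontr
        apply hm'
        have : fK m' x = 0 := congrArg Subtype.val hcontr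
        simpa only [fK, LinearMap.comp_apply, Submodule.subtype_apply, Submodule.mkQ_apply,
          Submodule.Quotient.mk_eq_zero] using this
      · refine Subtype.ext ?_
        show π (fK m' x) = π 0
        rw [hπf, hx0, map_zero]
    exact absurd (hn₀ m') (by omega)
  -- conclude
  intro a b hab
  have hd0 : d (a - b) = 0 := by rw [map_sub, hab, sub_self]
  set y : LinearMap.ker d := ⟨a - b, LinearMap.mem_ker.2 hd0⟩ with hy
  have h0 : fK n₀ ((PowerSeries.X ^ n₀ : PowerSeries Λ) • y) = 0 := by
    simp only [fK, LinearMap.comp_apply, Submodule.subtype_apply, Submodule.mkQ_apply,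
      Submodule.Quotient.mk_eq_zero]
    exact smul_mem_TT Λ n₀ _
  have := hinj _ h0
  have hsm : (PowerSeries.X ^ n₀ : PowerSeries Λ) • (a - b) = 0 := by
    have := congrArg Subtype.val this
    simpa using this
  have := mod_tf n₀ _ hsm
  exact sub_eq_zero.1 this
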